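/- The subspace V^{(*)} L^{p,λ}(ℝ^n), consisting of all f ∈ L^{p,λ}(ℝ^n) with lim_{N→∞} sup_{x∈ℝ^n} ∫_{B(x,1)} |f(y)|^p χ_{ℝ^n∖B(0,N)}(y) dy = 0, is a closed subspace of L^{p,λ}(ℝ^n) with respect to the Morrey norm. -/

import Mathlib

open MeasureTheory Metric Set Filter ENNReal

/-- ℝ≥0∞-valued Morrey modular `𝔐_{p,λ}(f;x,r) = r^{-λ} ∫_{B(x,r)} |f|^p`. -/
noncomputable def modularE {n : ℕ} (p lam : ℝ) (f : EuclideanSpace ℝ (Fin n) → ℝ)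
    (x : EuclideanSpace ℝ (Fin n)) (r : ℝ) : ℝ≥0∞ :=
  ENNReal.ofReal r ^ (-lam) * ∫⁻ y in ball x r, ENNReal.ofReal |f y| ^ p

/-- The `p`-th power of the Morrey norm: `sup_{x, r>0} 𝔐_{p,λ}(f;x,r)`. -/
noncomputable def morreyNormP {n : ℕ} (p lam : ℝ) (f : EuclideanSpace ℝ (Fin n) → ℝ) : ℝ≥0∞ :=
  ⨆ (x : EuclideanSpace ℝ (Fin n)) (r : ℝ) (_ : 0 < r), modularE p lam f x r

/-- Membership in the Morrey space `L^{p,λ}`. -/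
def MemMorrey {n : ℕ} (p lam : ℝ) (f : EuclideanSpace ℝ (Fin n) → ℝ) : Prop :=
  AEStronglyMeasurable f volume ∧ morreyNormP p lam f < ⊤

/-- `𝒜_{N,p}(f) = sup_x ∫_{B(x,1)} |f(y)|^p χ_{ℝⁿ∖B(0,N)}(y) dy`. -/
noncomputable def AN {n : ℕ} (p : ℝ) (f : EuclideanSpace ℝ (Fin n) → ℝ) (N : ℕ) : ℝ≥0∞ :=
  ⨆ x : EuclideanSpace ℝ (Fin n),
    ∫⁻ y in ball x 1 \ ball (0 : EuclideanSpace ℝ (Fin n)) N, ENNReal.ofReal |f y| ^ p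

/-- The vanishing property `(V^*)`: `𝒜_{N,p}(f) → 0` as `N → ∞`. -/
def VanishStar {n : ℕ} (p : ℝ) (f : EuclideanSpace ℝ (Fin n) → ℝ) : Prop :=
  Tendsto (fun N : ℕ => AN p f N) atTop (nhds 0)


lemma aux_two_rpow (p : ℝ) (hp : 0 ≤ p) (a b : ℝ≥0∞) : (a + b) ^ p ≤ 2 ^ p * (a ^ p + b ^ p) := by
  calc (a+b)^p ≤ (2*(a ⊔ b))^p := by
        apply ENNReal.rpow_le_rpow _ hp
        rw [two_mul]
        exact add_le_add le_sup_left le_sup_right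
    _ = 2^p * (a⊔b)^p := ENNReal.mul_rpow_of_nonneg _ _ hp
    _ ≤ 2^p * (a^p + b^p) := by
        gcongr
        rcases le_total a b with h|h
        · rw [sup_eq_right.mpr h]; exact le_add_self
        · rw [sup_eq_left.mpr h]; exact self_le_add_right _ _

lemma aux_le_morrey {n : ℕ} (p lam : ℝ) (g : EuclideanSpace ℝ (Fin n) → ℝ)
    (x : EuclideanSpace ℝ (Fin n)) (N : ℕ) :
    (∫⁻ y in ball x 1 \ ball (0 : EuclideanSpace ℝ (Fin n)) N, ENNReal.ofReal |g y| ^ p)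
      ≤ morreyNormP p lam g := by
  calc (∫⁻ y in ball x 1 \ ball (0 : EuclideanSpace ℝ (Fin n)) N, ENNReal.ofReal |g y| ^ p)
      ≤ ∫⁻ y in ball x 1, ENNReal.ofReal |g y| ^ p :=
        lintegral_mono' (Measure.restrict_mono diff_subset le_rfl) le_rfl
    _ = modularE p lam g x 1 := by
        simp [modularE]
    _ ≤ morreyNormP p lam g := by
        refine le_trans ?_ (le_iSup _ x)
        refine le_trans ?_ (le_iSup _ (1:ℝ))
        exact le_iSup (fun _ : (0:ℝ) < 1 => modularE p lam g x 1) one_pos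

/-- `V^{(*)} L^{p,λ}(ℝⁿ)` is closed in `L^{p,λ}(ℝⁿ)`: if `f_k ∈ V^{(*)} L^{p,λ}`
converge to `f ∈ L^{p,λ}` in Morrey norm, then `f ∈ V^{(*)} L^{p,λ}`. -/
theorem vanishStar_closed {n : ℕ} (p lam : ℝ) (hp : 1 ≤ p) (hlam0 : 0 ≤ lam)
    (hlamn : lam ≤ n)
    (f : EuclideanSpace ℝ (Fin n) → ℝ) (fk : ℕ → EuclideanSpace ℝ (Fin n) → ℝ)
    (hfk : ∀ k, MemMorrey p lam (fk k)) (hfkV : ∀ k, VanishStar p (fk k))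
    (hf : MemMorrey p lam f)
    (hconv : Tendsto (fun k => (morreyNormP p lam (fun y => fk k y - f y)) ^ (1 / p))
      atTop (nhds 0)) :
    VanishStar p f := by
  have hp0 : (0:ℝ) < p := lt_of_lt_of_le one_pos hp
  have hp0' : p ≠ 0 := ne_of_gt hp0
  set C : ℝ≥0∞ := 2 ^ p with hC
  have hCne0 : C ≠ 0 := by
    simpa [hC] using (ENNReal.rpow_pos (by norm_num) (by norm_num)).ne'
  have hCnetop : C ≠ ⊤ := ENNReal.rpow_ne_top_of_nonneg hp0.le (by norm_num)
  -- key inequality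
  have key : ∀ k N, AN p f N ≤ C * morreyNormP p lam (fun y => fk k y - f y)
      + C * AN p (fk k) N := by
    intro k N
    apply iSup_le
    intro x
    set S : Set (EuclideanSpace ℝ (Fin n)) := ball x 1 \ ball (0 : EuclideanSpace ℝ (Fin n)) N
    have hD : AEMeasurable (fun y => ENNReal.ofReal |fk k y - f y| ^ p)
        (volume.restrict S) := by
      have : AEMeasurable (fun y => fk k y - f y) (volume.restrict S) :=
        (((hfk k).1.sub hf.1).aemeasurable).restrict
      exact (((continuous_abs.measurable.comp_aemeasurable this)).ennreal_ofReal).pow_const p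
        |>.congr (by rfl)
    calc (∫⁻ y in S, ENNReal.ofReal |f y| ^ p)
        ≤ ∫⁻ y in S, C * (ENNReal.ofReal |fk k y - f y| ^ p + ENNReal.ofReal |fk k y| ^ p) := by
          apply lintegral_mono
          intro y
          have h1 : ENNReal.ofReal |f y| ≤
              ENNReal.ofReal |fk k y - f y| + ENNReal.ofReal |fk k y| := by
            rw [← ENNReal.ofReal_add (abs_nonneg _) (abs_nonneg _)]
            apply ENNReal.ofReal_le_ofReal
            have h2 := abs_add_le (f y - fk k y) (fk k y)
            rw [sub_add_cancel, abs_sub_comm] at h2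
            exact h2
          calc ENNReal.ofReal |f y| ^ p
              ≤ (ENNReal.ofReal |fk k y - f y| + ENNReal.ofReal |fk k y|) ^ p :=
                ENNReal.rpow_le_rpow h1 hp0.le
            _ ≤ C * (ENNReal.ofReal |fk k y - f y| ^ p + ENNReal.ofReal |fk k y| ^ p) :=
                aux_two_rpow p hp0.le _ _
      _ = C * ((∫⁻ y in S, ENNReal.ofReal |fk k y - f y| ^ p)
            + ∫⁻ y in S, ENNReal.ofReal |fk k y| ^ p) := by
          rw [lintegral_const_mul' _ _ hCnetop, lintegral_add_left' hD]
      _ ≤ C * morreyNormP p lam (fun y => fk k y - f y) + C * AN p (fk k) N := by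
          rw [mul_add]
          gcongr
          · exact aux_le_morrey p lam _ x N
          · exact le_iSup (fun x => ∫⁻ y in ball x 1 \ ball (0 : EuclideanSpace ℝ (Fin n)) N,
              ENNReal.ofReal |fk k y| ^ p) x
  -- the Morrey norms of differences tend to 0 (without the 1/p power)
  rw [VanishStar, ENNReal.tendsto_nhds_zero]
  intro ε hε
  rcases eq_or_ne ε ⊤ with rfl | hεtop
  · exact Eventually.of_forall fun _ => le_top
  set δ : ℝ≥0∞ := ε / 2 / C with hδ
  have hδ0 : 0 < δ := by
    have h2 : (0:ℝ≥0∞) < ε / 2 := ENNReal.div_pos hε.ne' ofNat_ne_top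
    exact ENNReal.div_pos h2.ne' hCnetop
  have hδtop : δ ≠ ⊤ :=
    (ENNReal.div_lt_top (ENNReal.div_lt_top hεtop two_ne_zero).ne hCne0).ne
  have hCδ : C * δ ≤ ε / 2 := le_of_eq (ENNReal.mul_div_cancel hCne0 hCnetop)
  -- choose k with morreyNormP (fk k - f) ≤ δ
  have hδp : (0:ℝ≥0∞) < δ ^ (1/p) := ENNReal.rpow_pos hδ0 hδtop
  obtain ⟨k, hk⟩ := ((ENNReal.tendsto_nhds_zero.mp hconv) _ hδp).exists
  have hk' : morreyNormP p lam (fun y => fk k y - f y) ≤ δ := by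
    have := ENNReal.rpow_le_rpow hk hp0.le
    rwa [← ENNReal.rpow_mul, ← ENNReal.rpow_mul, one_div_mul_cancel hp0',
      ENNReal.rpow_one, ENNReal.rpow_one] at this
  -- eventually AN (fk k) N ≤ δ
  filter_upwards [(ENNReal.tendsto_nhds_zero.mp (hfkV k)) δ hδ0] with N hN
  calc AN p f N ≤ C * morreyNormP p lam (fun y => fk k y - f y) + C * AN p (fk k) N := key k N
    _ ≤ C * δ + C * δ := by gcongr
    _ ≤ ε / 2 + ε / 2 := by gcongr
    _ = ε := ENNReal.add_halves ε
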